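/- arXiv:1103.2338 — 2 statements merged into one kernel-verified Lean document; each statement's English description precedes it below -/
import Mathlib

section
/- (Eckart–Young, optimality) Let A ∈ ℝ^{m×n} have singular values σ₁ ≥ … ≥ σ_p and let k < rank(A). Then for every matrix B ∈ ℝ^{m×n} with rank(B) ≤ k, one has ‖A − B‖₂ ≥ σ_{k+1}. -/
open Matrix

/-- The spectral (L2 operator) norm of a real matrix. -/
noncomputable def matSpectralNorm {m n : ℕ} (M : Matrix (Fin m) (Fin n) ℝ) : ℝ :=
  ‖LinearMap.toContinuousLinearMap (Matrix.toEuclideanLin M)‖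

lemma euclid_norm_eq_sqrt_dot (q : ℕ) (y : Fin q → ℝ) :
    ‖(WithLp.equiv 2 (Fin q → ℝ)).symm y‖ = Real.sqrt (y ⬝ᵥ y) := by
  rw [EuclideanSpace.norm_eq]
  congr 1
  simp [dotProduct, Real.norm_eq_abs, sq_abs, pow_two]

lemma orth_dot (r q : ℕ) (Q : Matrix (Fin r) (Fin q) ℝ) (hQ : Qᵀ * Q = 1) (y : Fin q → ℝ) :
    (Q *ᵥ y) ⬝ᵥ (Q *ᵥ y) = y ⬝ᵥ y := by
  rw [dotProduct_mulVec, ← mulVec_transpose, mulVec_mulVec, hQ, one_mulVec]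

/-- Eckart–Young (optimality): if A has singular values σ₁ ≥ σ₂ ≥ … and k < rank(A),
then every matrix B with rank(B) ≤ k satisfies ‖A - B‖₂ ≥ σ_{k+1}. -/
theorem eckart_young_spectral_lower_bound
    (m n : ℕ) (A : Matrix (Fin m) (Fin n) ℝ)
    (U : Matrix (Fin m) (Fin m) ℝ) (S : Matrix (Fin m) (Fin n) ℝ)
    (V : Matrix (Fin n) (Fin n) ℝ) (σ : Fin (min m n) → ℝ)
    (hU : U * Uᵀ = 1) (hV : V * Vᵀ = 1)
    (hSoff : ∀ (i : Fin m) (j : Fin n), (i : ℕ) ≠ (j : ℕ) → S i j = 0)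
    (hSdiag : ∀ k : Fin (min m n),
      S ⟨k, k.isLt.trans_le (min_le_left m n)⟩ ⟨k, k.isLt.trans_le (min_le_right m n)⟩ = σ k)
    (hσnonneg : ∀ k, 0 ≤ σ k)
    (hσmono : ∀ k l : Fin (min m n), k ≤ l → σ l ≤ σ k)
    (hA : A = U * S * Vᵀ)
    (k : ℕ) (hk : k < A.rank) :
    ∀ B : Matrix (Fin m) (Fin n) ℝ, B.rank ≤ k →
      σ ⟨k, lt_min (hk.trans_le A.rank_le_height) (hk.trans_le A.rank_le_width)⟩ ≤
        matSpectralNorm (A - B) := by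
  intro B hB
  have hkp : k < min m n := lt_min (hk.trans_le A.rank_le_height) (hk.trans_le A.rank_le_width)
  have hKp : k + 1 ≤ min m n := hkp
  have hKn : k + 1 ≤ n := hKp.trans (min_le_right m n)
  set σk : ℝ := σ ⟨k, hkp⟩ with hσk
  have hσknn : 0 ≤ σk := hσnonneg _
  have hVt : Vᵀ * V = 1 := mul_eq_one_comm.mp hV
  have hUt : Uᵀ * U = 1 := mul_eq_one_comm.mp hU
  -- extension-by-zero linear map
  let ext : (Fin (k+1) → ℝ) →ₗ[ℝ] (Fin n → ℝ) :=
    { toFun := fun d j => if h : (j : ℕ) < k + 1 then d ⟨j, h⟩ else 0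
      map_add' := by
        intro a b; funext j; by_cases h : (j : ℕ) ≤ k <;> simp [h]
      map_smul' := by
        intro r a; funext j; by_cases h : (j : ℕ) ≤ k <;> simp [h] }
  let L : (Fin (k+1) → ℝ) →ₗ[ℝ] (Fin m → ℝ) := B.mulVecLin ∘ₗ V.mulVecLin ∘ₗ ext
  -- rank of L is at most k
  have hrangeL : LinearMap.range L ≤ LinearMap.range B.mulVecLin := by
    rintro y ⟨d, rfl⟩
    exact ⟨V.mulVecLin (ext d), rfl⟩
  have hrkL : Module.finrank ℝ (LinearMap.range L) ≤ k :=
    le_trans (Submodule.finrank_mono hrangeL) hB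
  -- nontrivial kernel
  obtain ⟨d, hd0, hLd⟩ : ∃ d : Fin (k+1) → ℝ, d ≠ 0 ∧ L d = 0 := by
    have hrn := LinearMap.finrank_range_add_finrank_ker L
    rw [Module.finrank_fin_fun] at hrn
    have hpos : 0 < Module.finrank ℝ (LinearMap.ker L) := by omega
    obtain ⟨⟨x, hx⟩, hxne⟩ := Module.finrank_pos_iff_exists_ne_zero.mp hpos
    refine ⟨x, ?_, hx⟩
    intro h
    exact hxne (by simp [Submodule.mk_eq_zero, h])
  set c : Fin n → ℝ := ext d with hc
  -- ℕ-indexed extensions to avoid dependent rewriting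
  set σ' : ℕ → ℝ := fun i => if h : i < min m n then σ ⟨i, h⟩ else 0 with hσ'
  set d' : ℕ → ℝ := fun i => if h : i < k + 1 then d ⟨i, h⟩ else 0 with hd'
  have hcj : ∀ j : Fin n, c j = d' (j : ℕ) := fun j => rfl
  have hBx : B *ᵥ (V *ᵥ c) = 0 := hLd
  have hScomp : ∀ i : Fin m, (S *ᵥ c) i = σ' (i : ℕ) * d' (i : ℕ) := by
    intro i
    by_cases h : (i : ℕ) < k + 1
    · have hin : (i : ℕ) < n := lt_of_lt_of_le h hKn
      have himin : (i : ℕ) < min m n := lt_of_lt_of_le h hKp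
      have : (S *ᵥ c) i = S i ⟨i, hin⟩ * c ⟨i, hin⟩ := by
        rw [mulVec, dotProduct]
        refine Finset.sum_eq_single (⟨(i : ℕ), hin⟩ : Fin n) ?_
          (fun h => absurd (Finset.mem_univ _) h)
        intro j _ hj
        have : (i : ℕ) ≠ (j : ℕ) := by
          intro he; exact hj (by ext; exact he.symm)
        rw [hSoff i j this, zero_mul]
      rw [this]
      have hS : S i ⟨i, hin⟩ = σ ⟨i, himin⟩ := hSdiag ⟨(i : ℕ), himin⟩
      rw [hS, hcj]
      simp only [hσ', hd']
      rw [dif_pos himin, dif_pos h]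
    · have hz : (S *ᵥ c) i = 0 := by
        rw [mulVec, dotProduct]
        refine Finset.sum_eq_zero ?_
        intro j _
        by_cases hj : (j : ℕ) < k + 1
        · have : (i : ℕ) ≠ (j : ℕ) := by omega
          rw [hSoff i j this, zero_mul]
        · rw [hcj]
          simp [hd', show ¬ (j : ℕ) ≤ k by omega]
      rw [hz, hd']
      simp [h]
  -- sum bounds
  have hcc : c ⬝ᵥ c = ∑ i ∈ Finset.range (k+1), d' i ^ 2 := by
    rw [dotProduct]
    have : ∀ j : Fin n, c j * c j = d' (j : ℕ) ^ 2 := by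
      intro j; rw [hcj]; ring
    rw [Finset.sum_congr rfl (fun j _ => this j)]
    rw [Fin.sum_univ_eq_sum_range (fun i => d' i ^ 2) n]
    symm
    refine Finset.sum_subset ?_ ?_
    · intro t ht; simp at ht ⊢; omega
    · intro t _ ht
      simp only [Finset.mem_range, not_lt] at ht
      simp [hd', show ¬ t ≤ k by omega]
  have hScSc : (S *ᵥ c) ⬝ᵥ (S *ᵥ c) = ∑ i ∈ Finset.range (k+1), (σ' i * d' i) ^ 2 := by
    rw [dotProduct]
    rw [Finset.sum_congr rfl (fun i _ => by rw [hScomp i, ← pow_two])]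
    rw [Fin.sum_univ_eq_sum_range (fun i => (σ' i * d' i) ^ 2) m]
    symm
    refine Finset.sum_subset ?_ ?_
    · intro t ht; simp at ht ⊢
      exact lt_of_lt_of_le (Nat.lt_succ_of_le ht) (hKp.trans (min_le_left m n))
    · intro t _ ht
      simp only [Finset.mem_range, not_lt] at ht
      simp [hd', show ¬ t ≤ k by omega]
  have hkey : σk ^ 2 * (c ⬝ᵥ c) ≤ (S *ᵥ c) ⬝ᵥ (S *ᵥ c) := by
    rw [hcc, hScSc, Finset.mul_sum]
    refine Finset.sum_le_sum ?_
    intro i hi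
    simp only [Finset.mem_range] at hi
    have himin : i < min m n := lt_of_lt_of_le hi hKp
    have hσi : σk ≤ σ' i := by
      simp only [hσ', dif_pos himin]
      exact hσmono ⟨i, himin⟩ ⟨k, hkp⟩ (by simpa using Nat.lt_succ_iff.mp hi)
    have h1 : σk ^ 2 ≤ σ' i ^ 2 := by
      apply sq_le_sq' <;> nlinarith
    calc σk ^ 2 * d' i ^ 2 ≤ σ' i ^ 2 * d' i ^ 2 := by nlinarith [sq_nonneg (d' i)]
      _ = (σ' i * d' i) ^ 2 := by ring
  -- c is nonzero
  have hccpos : 0 < c ⬝ᵥ c := by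
    have : c ≠ 0 := by
      intro hc0
      apply hd0
      funext i
      have : c ⟨(i : ℕ), lt_of_lt_of_le i.isLt hKn⟩ = 0 := by rw [hc0]; rfl
      rw [hcj] at this
      simpa [hd', Nat.le_of_lt_succ i.isLt] using this
    obtain ⟨j, hj⟩ := Function.ne_iff.mp this
    have : 0 < c j * c j := mul_self_pos.mpr hj
    calc (0:ℝ) < c j * c j := this
      _ ≤ c ⬝ᵥ c := by
        rw [dotProduct]
        refine Finset.single_le_sum (fun t _ => mul_self_nonneg (c t)) (Finset.mem_univ j)
  -- put everything together
  set x : Fin n → ℝ := V *ᵥ c with hx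
  have hxx : x ⬝ᵥ x = c ⬝ᵥ c := orth_dot n n V hVt c
  have hAmB : (A - B) *ᵥ x = U *ᵥ (S *ᵥ c) := by
    rw [sub_mulVec, hBx, sub_zero, hx, mulVec_mulVec, hA]
    rw [Matrix.mul_assoc (U * S) Vᵀ V, hVt, Matrix.mul_one, ← mulVec_mulVec]
  have hAxAx : ((A - B) *ᵥ x) ⬝ᵥ ((A - B) *ᵥ x) = (S *ᵥ c) ⬝ᵥ (S *ᵥ c) := by
    rw [hAmB]; exact orth_dot m m U hUt (S *ᵥ c)
  -- operator norm argument
  set T := LinearMap.toContinuousLinearMap (Matrix.toEuclideanLin (A - B)) with hT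
  set xE : EuclideanSpace ℝ (Fin n) := (WithLp.equiv 2 (Fin n → ℝ)).symm x with hxE
  have hTx : T xE = (WithLp.equiv 2 (Fin m → ℝ)).symm ((A - B) *ᵥ x) :=
    Matrix.toEuclideanLin_apply_piLp_toLp (A - B) x
  have hnTx : ‖T xE‖ = Real.sqrt ((S *ᵥ c) ⬝ᵥ (S *ᵥ c)) := by
    rw [hTx, euclid_norm_eq_sqrt_dot, hAxAx]
  have hnxE : ‖xE‖ = Real.sqrt (c ⬝ᵥ c) := by
    rw [hxE, euclid_norm_eq_sqrt_dot, hxx]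
  have hle : ‖T xE‖ ≤ matSpectralNorm (A - B) * ‖xE‖ := T.le_opNorm xE
  have hlow : σk * ‖xE‖ ≤ ‖T xE‖ := by
    rw [hnTx, hnxE]
    have : σk * Real.sqrt (c ⬝ᵥ c) = Real.sqrt (σk ^ 2 * (c ⬝ᵥ c)) := by
      rw [Real.sqrt_mul (sq_nonneg σk), Real.sqrt_sq hσknn]
    rw [this]
    exact Real.sqrt_le_sqrt hkey
  have hxEpos : 0 < ‖xE‖ := by
    rw [hnxE]; exact Real.sqrt_pos.mpr hccpos
  exact le_of_mul_le_mul_right (hlow.trans hle) hxEpos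
end

section
/- (Eckart–Young for Frobenius norm) If A has SVD with singular values σ₁ ≥ … ≥ σ_r > 0 and A_k is the k-truncated SVD sum (k < r), then ‖A − A_k‖_F² = Σ_{i=k+1}^r σᵢ², and this is minimal over all matrices of rank at most k. -/
open Matrix

lemma ey_sum_sq_eq_trace {m n : ℕ} (X : Matrix (Fin m) (Fin n) ℝ) :
    (∑ i, ∑ j, X i j ^ 2) = Matrix.trace (Xᵀ * X) := by
  rw [Matrix.trace, Finset.sum_comm]
  simp [Matrix.diag, Matrix.mul_apply, sq]

lemma ey_transpose_vmv {α β : Type*} (a : α → ℝ) (b : β → ℝ) :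
    (vecMulVec a b)ᵀ = vecMulVec b a := by
  ext i j; simp [vecMulVec_apply, mul_comm]

lemma ey_vmv_mul_vmv {α β γ : Type*} [Fintype β] (a : α → ℝ) (b c : β → ℝ) (d : γ → ℝ) :
    vecMulVec a b * vecMulVec c d = (∑ i, b i * c i) • vecMulVec a d := by
  ext i j
  simp only [Matrix.mul_apply, vecMulVec_apply, Matrix.smul_apply, smul_eq_mul,
    Finset.sum_mul]
  exact Finset.sum_congr rfl fun x _ => by ring

lemma ey_trace_vmv {α : Type*} [Fintype α] (a b : α → ℝ) :
    Matrix.trace (vecMulVec a b) = ∑ i, a i * b i := by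
  simp [Matrix.trace, Matrix.diag, vecMulVec_apply]

/-- Gram computation for a sum of rank-one terms with orthonormal left factors. -/
lemma ey_gram {m n r : ℕ} (x : Fin r → Fin m → ℝ) (y : Fin r → Fin n → ℝ)
    (hx : ∀ i j : Fin r, (∑ l, x i l * x j l) = if i = j then 1 else 0)
    (σ : Fin r → ℝ) (S : Finset (Fin r)) :
    (∑ l ∈ S, σ l • vecMulVec (x l) (y l))ᵀ * (∑ l ∈ S, σ l • vecMulVec (x l) (y l)) =
      ∑ l ∈ S, (σ l) ^ 2 • vecMulVec (y l) (y l) := by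
  rw [Matrix.transpose_sum, Matrix.sum_mul]
  simp only [Matrix.transpose_smul, ey_transpose_vmv, Matrix.mul_sum, Matrix.smul_mul,
    Matrix.mul_smul, ey_vmv_mul_vmv, hx]
  rw [Finset.sum_congr rfl (fun l hl => Finset.sum_eq_single l
    (fun s _ hs => by simp [if_neg (Ne.symm hs)])
    (fun h => absurd hl h))]
  refine Finset.sum_congr rfl fun l _ => ?_
  simp [smul_smul, sq]

open Matrix

/-- Elementary Bessel inequality for a finite orthonormal family given by sums. -/
lemma ey_bessel {d ι : Type*} [Fintype d] [Fintype ι] [DecidableEq ι] (e : ι → d → ℝ)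
    (he : ∀ a b : ι, (∑ i, e a i * e b i) = if a = b then 1 else 0) (x : d → ℝ) :
    (∑ a, (∑ i, e a i * x i) ^ 2) ≤ ∑ i, (x i) ^ 2 := by
  set c : ι → ℝ := fun a => ∑ i, e a i * x i with hc
  have hca : ∀ a, c a = ∑ i, e a i * x i := fun a => rfl
  have h0 : (0:ℝ) ≤ ∑ i, (x i - ∑ a, c a * e a i) ^ 2 :=
    Finset.sum_nonneg fun i _ => sq_nonneg _
  have hexp : (∑ i, (x i - ∑ a, c a * e a i) ^ 2)
      = (∑ i, (x i)^2) - 2 * (∑ i, x i * (∑ a, c a * e a i))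
        + ∑ i, (∑ a, c a * e a i) ^ 2 := by
    have h1 : ∀ i : d, (x i - ∑ a, c a * e a i) ^ 2
        = x i ^ 2 - 2 * (x i * (∑ a, c a * e a i)) + (∑ a, c a * e a i) ^ 2 := fun i => by ring
    simp only [h1]
    rw [Finset.sum_add_distrib, Finset.sum_sub_distrib, Finset.mul_sum]
  have hT2 : (∑ i, x i * (∑ a, c a * e a i)) = ∑ a, (c a)^2 := by
    simp only [Finset.mul_sum]
    rw [Finset.sum_comm]
    refine Finset.sum_congr rfl fun a _ => ?_
    have : ∑ i, x i * (c a * e a i) = c a * ∑ i, e a i * x i := by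
      rw [Finset.mul_sum]; exact Finset.sum_congr rfl fun i _ => by ring
    rw [this, ← hca]; ring
  have hT3 : (∑ i, (∑ a, c a * e a i) ^ 2) = ∑ a, (c a)^2 := by
    simp only [sq, Finset.sum_mul_sum]
    rw [Finset.sum_comm]
    refine Finset.sum_congr rfl fun a _ => ?_
    rw [Finset.sum_comm]
    have : ∀ b : ι, (∑ i, c a * e a i * (c b * e b i)) = (c a * c b) * ∑ i, e a i * e b i := by
      intro b; rw [Finset.mul_sum]; exact Finset.sum_congr rfl fun i _ => by ring
    simp only [this, he]
    simp [Finset.sum_ite_eq, mul_comm]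
  rw [hexp, hT2, hT3] at h0
  have : (∑ a, (c a)^2) = ∑ a, (∑ i, e a i * x i) ^ 2 := rfl
  linarith

lemma ey_card_filter {r k : ℕ} (hk : k ≤ r) :
    (Finset.univ.filter (fun l : Fin r => (l : ℕ) < k)).card = k := by
  have : (Finset.univ.filter (fun l : Fin r => (l : ℕ) < k))
      = Finset.map (Fin.castLEEmb hk) Finset.univ := by
    ext a
    simp only [Finset.mem_filter, Finset.mem_univ, true_and, Finset.mem_map,
      Fin.castLEEmb_apply]
    constructor
    · intro h; exact ⟨⟨(a : ℕ), h⟩, by ext; simp⟩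
    · rintro ⟨i, rfl⟩; simp
  simp [this]

/-- Majorization step: substochastic weights against a decreasing sequence. -/
lemma ey_majorize {r k : ℕ} (hk : k < r) (s : Fin r → ℝ) (hs0 : ∀ l, 0 ≤ s l)
    (hmono : ∀ i j : Fin r, i ≤ j → s j ≤ s i) (T : Fin r → ℝ)
    (hT0 : ∀ l, 0 ≤ T l) (hT1 : ∀ l, T l ≤ 1) (hTsum : (∑ l, T l) ≤ (k : ℝ)) :
    (∑ l, s l * T l) ≤ ∑ l ∈ Finset.univ.filter (fun l : Fin r => (l : ℕ) < k), s l := by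
  classical
  set κ : Fin r := ⟨k, hk⟩ with hκ
  set K := Finset.univ.filter (fun l : Fin r => (l : ℕ) < k) with hK
  set Kc := Finset.univ.filter (fun l : Fin r => ¬ ((l : ℕ) < k)) with hKc
  have hsplit : (∑ l, s l * T l) = (∑ l ∈ K, s l * T l) + ∑ l ∈ Kc, s l * T l :=
    (Finset.sum_filter_add_sum_filter_not _ _ _).symm
  have hbound1 : (∑ l ∈ Kc, s l * T l) ≤ s κ * ∑ l ∈ Kc, T l := by
    rw [Finset.mul_sum]
    refine Finset.sum_le_sum fun l hl => ?_
    have hl' : k ≤ (l : ℕ) := by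
      simp only [hKc, Finset.mem_filter] at hl; omega
    exact mul_le_mul_of_nonneg_right (hmono κ l hl') (hT0 l)
  have hKcard : K.card = k := ey_card_filter hk.le
  have hbound2 : (∑ l ∈ Kc, T l) ≤ ∑ l ∈ K, (1 - T l) := by
    have h1 : (∑ l ∈ K, T l) + ∑ l ∈ Kc, T l = ∑ l, T l :=
      Finset.sum_filter_add_sum_filter_not _ _ _
    have h2 : (∑ l ∈ K, (1 - T l)) = k - ∑ l ∈ K, T l := by
      rw [Finset.sum_sub_distrib, Finset.sum_const, hKcard]; simp
    linarith
  have hbound3 : s κ * (∑ l ∈ K, (1 - T l)) ≤ ∑ l ∈ K, s l * (1 - T l) := by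
    rw [Finset.mul_sum]
    refine Finset.sum_le_sum fun l hl => ?_
    have hl' : (l : ℕ) < k := by simp only [hK, Finset.mem_filter] at hl; exact hl.2
    have : l ≤ κ := by simp [hκ, Fin.le_def]; omega
    have := hmono l κ this
    nlinarith [hT1 l]
  have hfin : (∑ l ∈ K, s l * T l) + ∑ l ∈ K, s l * (1 - T l) = ∑ l ∈ K, s l := by
    rw [← Finset.sum_add_distrib]
    exact Finset.sum_congr rfl fun l _ => by ring
  have hκ0 : 0 ≤ s κ := hs0 κ
  calc (∑ l, s l * T l) = (∑ l ∈ K, s l * T l) + ∑ l ∈ Kc, s l * T l := hsplit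
    _ ≤ (∑ l ∈ K, s l * T l) + s κ * ∑ l ∈ Kc, T l := by linarith
    _ ≤ (∑ l ∈ K, s l * T l) + s κ * ∑ l ∈ K, (1 - T l) := by nlinarith
    _ ≤ (∑ l ∈ K, s l * T l) + ∑ l ∈ K, s l * (1 - T l) := by linarith
    _ = ∑ l ∈ K, s l := hfin

set_option maxHeartbeats 1000000 in
/-- Eckart–Young for the Frobenius norm: the k-truncated SVD A_k satisfies
‖A - A_k‖_F² = Σ_{i>k} σᵢ², and A_k minimizes the Frobenius distance to A among
all matrices of rank at most k. -/
theorem eckart_young_frobenius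
    (m n r : ℕ) (A : Matrix (Fin m) (Fin n) ℝ)
    (σ : Fin r → ℝ) (u : Fin r → Fin m → ℝ) (v : Fin r → Fin n → ℝ)
    (hu : ∀ i j : Fin r, (∑ l, u i l * u j l) = if i = j then 1 else 0)
    (hv : ∀ i j : Fin r, (∑ l, v i l * v j l) = if i = j then 1 else 0)
    (hσpos : ∀ i, 0 < σ i)
    (hσmono : ∀ i j : Fin r, i ≤ j → σ j ≤ σ i)
    (hA : A = ∑ i, σ i • vecMulVec (u i) (v i))
    (k : ℕ) (hk : k < r) :
    (∑ i, ∑ j, ((A - ∑ l ∈ Finset.univ.filter (fun l : Fin r => (l : ℕ) < k),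
          σ l • vecMulVec (u l) (v l)) i j) ^ 2) =
        (∑ l ∈ Finset.univ.filter (fun l : Fin r => k ≤ (l : ℕ)), σ l ^ 2) ∧
      ∀ B : Matrix (Fin m) (Fin n) ℝ, B.rank ≤ k →
        (∑ i, ∑ j, ((A - ∑ l ∈ Finset.univ.filter (fun l : Fin r => (l : ℕ) < k),
            σ l • vecMulVec (u l) (v l)) i j) ^ 2) ≤ ∑ i, ∑ j, ((A - B) i j) ^ 2 := by
  classical
  -- the tail matrix
  set Kc : Finset (Fin r) := Finset.univ.filter (fun l : Fin r => k ≤ (l : ℕ)) with hKcdef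
  have hdiff : (A - ∑ l ∈ Finset.univ.filter (fun l : Fin r => (l : ℕ) < k),
      σ l • vecMulVec (u l) (v l)) = ∑ l ∈ Kc, σ l • vecMulVec (u l) (v l) := by
    have hsplit : (∑ l ∈ Finset.univ.filter (fun l : Fin r => (l : ℕ) < k),
        σ l • vecMulVec (u l) (v l)) + (∑ l ∈ Finset.univ.filter (fun l : Fin r => ¬ ((l : ℕ) < k)),
        σ l • vecMulVec (u l) (v l)) = A := by
      rw [hA]; exact Finset.sum_filter_add_sum_filter_not _ _ _
    have hKc' : Finset.univ.filter (fun l : Fin r => ¬ ((l : ℕ) < k)) = Kc := by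
      apply Finset.filter_congr; intro l _; simp [not_lt]
    rw [← hsplit, hKc']; abel
  -- part 1
  have hpart1 : (∑ i, ∑ j, ((A - ∑ l ∈ Finset.univ.filter (fun l : Fin r => (l : ℕ) < k),
      σ l • vecMulVec (u l) (v l)) i j) ^ 2) = ∑ l ∈ Kc, σ l ^ 2 := by
    rw [hdiff, ey_sum_sq_eq_trace, ey_gram u v hu σ Kc, Matrix.trace_sum]
    refine Finset.sum_congr rfl fun l _ => ?_
    rw [Matrix.trace_smul, ey_trace_vmv, hv l l]
    simp
  refine ⟨hpart1, ?_⟩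
  -- part 2
  intro B hB
  rw [hpart1]
  -- the orthonormal family spanning the column space of B
  set E := EuclideanSpace ℝ (Fin m)
  set W : Submodule ℝ E := Submodule.map
    ((WithLp.linearEquiv 2 ℝ (Fin m → ℝ)).symm.toLinearMap) (LinearMap.range B.mulVecLin)
    with hWdef
  set k' := Module.finrank ℝ W with hk'def
  have hk'rank : k' = B.rank := by
    rw [hk'def, hWdef, Matrix.rank]
    exact LinearEquiv.finrank_map_eq _ _
  have hk'le : k' ≤ k := hk'rank ▸ hB
  set b := stdOrthonormalBasis ℝ W with hbdef
  set w : Fin k' → (Fin m → ℝ) := fun t => (WithLp.equiv 2 (Fin m → ℝ)) ((b t : W) : E) with hwdef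
  have hw : ∀ s t : Fin k', (∑ i, w s i * w t i) = if s = t then 1 else 0 := by
    intro s t
    have h := orthonormal_iff_ite.mp b.orthonormal s t
    rw [Submodule.coe_inner, PiLp.inner_apply] at h
    simp [RCLike.inner_apply, hwdef] at h
    rw [← h]
    exact Finset.sum_congr rfl fun i _ => mul_comm _ _
  have hrep : ∀ j, ∃ c : Fin k' → ℝ, ∀ i, B i j = ∑ t, c t * w t i := by
    intro j
    set x : E := (WithLp.linearEquiv 2 ℝ (Fin m → ℝ)).symm (B *ᵥ Pi.single j 1) with hxdef
    have hxW : x ∈ W := ⟨B *ᵥ Pi.single j 1, ⟨Pi.single j 1, rfl⟩, rfl⟩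
    refine ⟨fun t => b.repr ⟨x, hxW⟩ t, fun i => ?_⟩
    have hsum := b.sum_repr ⟨x, hxW⟩
    have hfun : (∑ t, b.repr ⟨x, hxW⟩ t • ((b t : W) : E)) = x := by
      have := congrArg (Subtype.val) hsum
      simpa using this
    set g : E →ₗ[ℝ] ℝ := (LinearMap.proj i : ((Fin m → ℝ)) →ₗ[ℝ] ℝ) ∘ₗ
      (WithLp.linearEquiv 2 ℝ (Fin m → ℝ)).toLinearMap with hgdef
    have hg := congrArg g hfun
    rw [map_sum] at hg
    have hgx : g x = B i j := by
      rw [hxdef]; simp only [hgdef, LinearMap.coe_comp, Function.comp_apply, LinearEquiv.coe_coe,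
        LinearMap.proj_apply]
      rw [LinearEquiv.apply_symm_apply]
      simp [Matrix.mulVec_single]
    have hgt : ∀ t, g (b.repr ⟨x, hxW⟩ t • ((b t : W) : E)) = b.repr ⟨x, hxW⟩ t * w t i := by
      intro t
      rw [_root_.map_smul]
      have : g ((b t : W) : E) = w t i := rfl
      rw [this, smul_eq_mul]
    rw [← hgx, ← hg]
    exact Finset.sum_congr rfl fun t _ => (hgt t).symm
  choose c hc using hrep
  set Wm : Matrix (Fin m) (Fin k') ℝ := fun i t => w t i with hWm
  set Cm : Matrix (Fin k') (Fin n) ℝ := fun t j => c j t with hCm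
  have hfact : B = Wm * Cm := by
    ext i j
    rw [hc j i, Matrix.mul_apply]
    exact Finset.sum_congr rfl fun t _ => by simp [hWm, hCm]; ring
  have hWW : Wmᵀ * Wm = 1 := by
    ext s t
    rw [Matrix.mul_apply, Matrix.one_apply]
    exact hw s t
  set P : Matrix (Fin m) (Fin m) ℝ := Wm * Wmᵀ with hP
  have hPt : Pᵀ = P := by rw [hP, Matrix.transpose_mul, Matrix.transpose_transpose]
  have hPP : P * P = P := by
    rw [hP, Matrix.mul_assoc, ← Matrix.mul_assoc Wmᵀ, hWW, Matrix.one_mul]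
  have hPB : P * B = B := by
    rw [hfact, hP, Matrix.mul_assoc, ← Matrix.mul_assoc Wmᵀ, hWW, Matrix.one_mul]
  set X := A - P * A with hX
  set Y := P * A - B with hY
  have hX1 : X = (1 - P) * A := by rw [hX, Matrix.sub_mul, Matrix.one_mul]
  have hXY : Xᵀ * Y = 0 := by
    have h1 : (1 - P) * Y = 0 := by
      rw [hY, Matrix.sub_mul, Matrix.one_mul, Matrix.mul_sub, ← Matrix.mul_assoc, hPP, hPB]
      abel
    rw [hX1, Matrix.transpose_mul, Matrix.transpose_sub, Matrix.transpose_one, hPt,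
      Matrix.mul_assoc, h1, Matrix.mul_zero]
  have hYX : Yᵀ * X = 0 := by
    have h2 : (Xᵀ * Y)ᵀ = Yᵀ * X := by rw [Matrix.transpose_mul, Matrix.transpose_transpose]
    rw [← h2, hXY, Matrix.transpose_zero]
  have hdecomp : Matrix.trace ((A - B)ᵀ * (A - B)) = Matrix.trace (Xᵀ * X) + Matrix.trace (Yᵀ * Y) := by
    have hAB : A - B = X + Y := by rw [hX, hY]; abel
    rw [hAB, Matrix.transpose_add, Matrix.add_mul, Matrix.mul_add, Matrix.mul_add,
      Matrix.trace_add, Matrix.trace_add, Matrix.trace_add, hXY, hYX, Matrix.trace_zero]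
    ring
  have hXX : Matrix.trace (Xᵀ * X) = Matrix.trace (Aᵀ * A) - Matrix.trace (P * (A * Aᵀ)) := by
    have e1 : Xᵀ * X = Aᵀ * A - Aᵀ * (P * A) - Aᵀ * P * A + Aᵀ * P * (P * A) := by
      rw [hX, Matrix.transpose_sub, Matrix.transpose_mul, hPt, Matrix.sub_mul,
        Matrix.mul_sub, Matrix.mul_sub]
      abel
    have e1' : Aᵀ * P * (P * A) = Aᵀ * (P * A) := by
      rw [Matrix.mul_assoc, ← Matrix.mul_assoc P P A, hPP]
    have e1'' : Aᵀ * P * A = Aᵀ * (P * A) := Matrix.mul_assoc _ _ _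
    have e2 : Matrix.trace (Aᵀ * (P * A)) = Matrix.trace (P * (A * Aᵀ)) := by
      rw [Matrix.trace_mul_comm, Matrix.mul_assoc]
    rw [e1, e1', e1'']
    simp only [Matrix.trace_add, Matrix.trace_sub, e2]
    ring
  have hAT : Aᵀ = ∑ l, σ l • vecMulVec (v l) (u l) := by
    rw [hA, Matrix.transpose_sum]
    exact Finset.sum_congr rfl fun l _ => by rw [Matrix.transpose_smul, ey_transpose_vmv]
  have hAAT : A * Aᵀ = ∑ l, (σ l) ^ 2 • vecMulVec (u l) (u l) := by
    have := ey_gram v u hv σ Finset.univ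
    rw [← hAT] at this
    rw [Matrix.transpose_transpose] at this
    exact this
  have hATA : Matrix.trace (Aᵀ * A) = ∑ l, (σ l) ^ 2 := by
    rw [hA, ey_gram u v hu σ Finset.univ, Matrix.trace_sum]
    refine Finset.sum_congr rfl fun l _ => ?_
    rw [Matrix.trace_smul, ey_trace_vmv, hv l l]
    simp
  set T : Fin r → ℝ := fun l => ∑ t, (∑ i, u l i * w t i) ^ 2 with hT
  have hPsum : P = ∑ t, vecMulVec (w t) (w t) := by
    ext i i'
    rw [hP, Matrix.mul_apply, Matrix.sum_apply]
    exact Finset.sum_congr rfl fun t _ => by rw [vecMulVec_apply]; rfl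
  have htrP : Matrix.trace (P * (A * Aᵀ)) = ∑ l, (σ l) ^ 2 * T l := by
    rw [hPsum, hAAT, Matrix.sum_mul]
    simp only [Matrix.mul_sum, Matrix.mul_smul, Matrix.trace_sum, Matrix.trace_smul,
      ey_vmv_mul_vmv, smul_smul, ey_trace_vmv, smul_eq_mul]
    rw [Finset.sum_comm]
    refine Finset.sum_congr rfl fun l _ => ?_
    rw [hT, Finset.mul_sum]
    refine Finset.sum_congr rfl fun t _ => ?_
    have h1 : (∑ i, w t i * u l i) = ∑ i, u l i * w t i :=
      Finset.sum_congr rfl fun i _ => mul_comm _ _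
    rw [h1]
    ring
  have hT0 : ∀ l, 0 ≤ T l := fun l => Finset.sum_nonneg fun t _ => sq_nonneg _
  have hT1 : ∀ l, T l ≤ 1 := by
    intro l
    have hb := ey_bessel w hw (u l)
    have hul : (∑ i, u l i ^ 2) = 1 := by
      have := hu l l; simp at this; simpa [sq] using this
    rw [hul] at hb
    refine le_trans (le_of_eq ?_) hb
    rw [hT]
    refine Finset.sum_congr rfl fun t _ => ?_
    congr 1
    exact Finset.sum_congr rfl fun i _ => mul_comm _ _
  have hTsum : (∑ l, T l) ≤ (k : ℝ) := by
    have h1 : (∑ l, T l) = ∑ t, ∑ l, (∑ i, u l i * w t i) ^ 2 := Finset.sum_comm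
    have h2 : ∀ t : Fin k', (∑ l, (∑ i, u l i * w t i) ^ 2) ≤ 1 := by
      intro t
      have hb := ey_bessel u hu (w t)
      have hwt : (∑ i, w t i ^ 2) = 1 := by
        have := hw t t; simp at this; simpa [sq] using this
      rw [hwt] at hb
      exact hb
    calc (∑ l, T l) = ∑ t, ∑ l, (∑ i, u l i * w t i) ^ 2 := h1
      _ ≤ ∑ _t : Fin k', (1 : ℝ) := Finset.sum_le_sum fun t _ => h2 t
      _ = (k' : ℝ) := by simp
      _ ≤ (k : ℝ) := by exact_mod_cast hk'le
  have hmaj : (∑ l, (σ l) ^ 2 * T l) ≤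
      ∑ l ∈ Finset.univ.filter (fun l : Fin r => (l : ℕ) < k), (σ l) ^ 2 := by
    refine ey_majorize hk (fun l => (σ l) ^ 2) (fun l => sq_nonneg _) ?_ T hT0 hT1 hTsum
    intro i j hij
    show (σ j) ^ 2 ≤ (σ i) ^ 2
    nlinarith [hσmono i j hij, (hσpos j).le]
  have hsplitσ : (∑ l ∈ Finset.univ.filter (fun l : Fin r => (l : ℕ) < k), (σ l) ^ 2)
      + (∑ l ∈ Kc, (σ l) ^ 2) = ∑ l, (σ l) ^ 2 := by
    have hKc' : Finset.univ.filter (fun l : Fin r => ¬ ((l : ℕ) < k)) = Kc := by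
      apply Finset.filter_congr; intro l _; simp [not_lt]
    rw [← hKc']
    exact Finset.sum_filter_add_sum_filter_not _ _ _
  have hYY : 0 ≤ Matrix.trace (Yᵀ * Y) := by
    rw [← ey_sum_sq_eq_trace]
    exact Finset.sum_nonneg fun i _ => Finset.sum_nonneg fun j _ => sq_nonneg _
  have hRHS : (∑ i, ∑ j, ((A - B) i j) ^ 2) = Matrix.trace ((A - B)ᵀ * (A - B)) :=
    ey_sum_sq_eq_trace _
  rw [hRHS, hdecomp, hXX, hATA, htrP]
  linarith
end
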